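/- A λ-term M is solvable if and only if its head reduction sequence is finite (i.e., head reduction starting from M terminates in a head normal form). -/

import Mathlib

/-- Pure λ-terms with variables named by natural numbers. -/
inductive Tm : Type
  | var : ℕ → Tm
  | lam : ℕ → Tm → Tm
  | app : Tm → Tm → Tm
deriving DecidableEq

namespace Tm

/-- Free variables of a term. -/
def fv : Tm → Finset ℕ
  | var x => {x}
  | lam x t => fv t \ {x}
  | app t u => fv t ∪ fv u

/-- A variable fresh for a given finite set of variables. -/
def fresh (s : Finset ℕ) : ℕ := (s.sup id) + 1

/-- Capture-avoiding simultaneous substitution. -/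
def subst (σ : ℕ → Tm) : Tm → Tm
  | var x => σ x
  | app t u => app (subst σ t) (subst σ u)
  | lam x t =>
      let y := fresh ((fv t \ {x}).biUnion fun z => fv (σ z))
      lam y (subst (fun z => if z = x then var y else σ z) t)

/-- `M[x := N]`. -/
def subst1 (x : ℕ) (N M : Tm) : Tm :=
  subst (fun z => if z = x then N else var z) M

/-- `λx₁…xₙ. t`. -/
def lams (xs : List ℕ) (t : Tm) : Tm := xs.foldr lam t

/-- `t M₁ ⋯ Mₘ`. -/
def apps (t : Tm) (ts : List Tm) : Tm := ts.foldl app t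

/-- One-step β-reduction: contextual closure of the β-rule. -/
inductive Step : Tm → Tm → Prop
  | beta (x : ℕ) (M N : Tm) : Step (app (lam x M) N) (subst1 x N M)
  | appL {M M' : Tm} (N : Tm) : Step M M' → Step (app M N) (app M' N)
  | appR (M : Tm) {N N' : Tm} : Step N N' → Step (app M N) (app M N')
  | abs (x : ℕ) {M M' : Tm} : Step M M' → Step (lam x M) (lam x M')

/-- β-reduction: reflexive-transitive closure of one-step β-reduction. -/
def Red : Tm → Tm → Prop := Relation.ReflTransGen Step

/-- β-convertibility: the equivalence relation generated by β-reduction. -/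
def Conv : Tm → Tm → Prop := Relation.EqvGen Step

/-- `M` is solvable if `(λx⃗.M) N₁ ⋯ Nₙ` β-reduces to the identity,
where `x⃗` covers the free variables of `M`. -/
def Solvable (M : Tm) : Prop :=
  ∃ (xs : List ℕ) (Ns : List Tm) (y : ℕ),
    M.fv ⊆ xs.toFinset ∧ Red (apps (lams xs M) Ns) (lam y (var y))

/-- One-step head reduction: contraction of the head redex. -/
inductive HeadStep : Tm → Tm → Prop
  | beta (x : ℕ) (M N : Tm) (Ms : List Tm) :
      HeadStep (apps (app (lam x M) N) Ms) (apps (subst1 x N M) Ms)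
  | abs (x : ℕ) {M M' : Tm} : HeadStep M M' → HeadStep (lam x M) (lam x M')

end Tm


inductive Db : Type
  | var : ℕ → Db
  | lam : Db → Db
  | app : Db → Db → Db
deriving DecidableEq

namespace Db

def upr (ρ : ℕ → ℕ) : ℕ → ℕ
  | 0 => 0
  | j+1 => ρ j + 1

def rename (ρ : ℕ → ℕ) : Db → Db
  | var i => var (ρ i)
  | lam t => lam (rename (upr ρ) t)
  | app t u => app (rename ρ t) (rename ρ u)

def ups (σ : ℕ → Db) : ℕ → Db
  | 0 => var 0
  | j+1 => rename Nat.succ (σ j)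

def subst (σ : ℕ → Db) : Db → Db
  | var i => σ i
  | lam t => lam (subst (ups σ) t)
  | app t u => app (subst σ t) (subst σ u)

def cons (N : Db) (σ : ℕ → Db) : ℕ → Db
  | 0 => N
  | j+1 => σ j

def subst0 (M N : Db) : Db := subst (cons N var) M

lemma upr_comp (ρ π : ℕ → ℕ) : upr ρ ∘ upr π = upr (ρ ∘ π) := by
  funext i; cases i <;> rfl

lemma rename_rename (ρ π : ℕ → ℕ) (t : Db) :
    rename ρ (rename π t) = rename (ρ ∘ π) t := by
  induction t generalizing ρ π with
  | var i => rfl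
  | lam t ih => simp [rename, ih, upr_comp]
  | app t u iht ihu => simp [rename, iht, ihu]

lemma ups_upr (σ : ℕ → Db) (π : ℕ → ℕ) : ups σ ∘ upr π = ups (σ ∘ π) := by
  funext i; cases i <;> rfl

lemma subst_rename (σ : ℕ → Db) (π : ℕ → ℕ) (t : Db) :
    subst σ (rename π t) = subst (σ ∘ π) t := by
  induction t generalizing σ π with
  | var i => rfl
  | lam t ih => simp [rename, subst, ih, ups_upr]
  | app t u iht ihu => simp [rename, subst, iht, ihu]

lemma ups_rename (ρ : ℕ → ℕ) (σ : ℕ → Db) :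
    ups (fun i => rename ρ (σ i)) = fun i => rename (upr ρ) (ups σ i) := by
  funext i; cases i with
  | zero => rfl
  | succ j =>
    show rename Nat.succ (rename ρ (σ j)) = rename (upr ρ) (rename Nat.succ (σ j))
    rw [rename_rename, rename_rename]; rfl

lemma rename_subst (ρ : ℕ → ℕ) (σ : ℕ → Db) (t : Db) :
    rename ρ (subst σ t) = subst (fun i => rename ρ (σ i)) t := by
  induction t generalizing ρ σ with
  | var i => rfl
  | lam t ih => simp [rename, subst, ih, ups_rename]
  | app t u iht ihu => simp [rename, subst, iht, ihu]

lemma ups_subst (σ τ : ℕ → Db) :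
    ups (fun i => subst σ (τ i)) = fun i => subst (ups σ) (ups τ i) := by
  funext i; cases i with
  | zero => rfl
  | succ j =>
    show rename Nat.succ (subst σ (τ j)) = subst (ups σ) (rename Nat.succ (τ j))
    rw [rename_subst, subst_rename]; rfl

lemma subst_subst (σ τ : ℕ → Db) (t : Db) :
    subst σ (subst τ t) = subst (fun i => subst σ (τ i)) t := by
  induction t generalizing σ τ with
  | var i => rfl
  | lam t ih => simp [subst, ih, ups_subst]
  | app t u iht ihu => simp [subst, iht, ihu]

lemma ups_var : ups var = var := by funext i; cases i <;> rfl

lemma subst_var (t : Db) : subst var t = t := by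
  induction t with
  | var i => rfl
  | lam t ih => simp [subst, ups_var, ih]
  | app t u iht ihu => simp [subst, iht, ihu]

lemma rename_eq_subst (ρ : ℕ → ℕ) (t : Db) :
    rename ρ t = subst (fun i => var (ρ i)) t := by
  induction t generalizing ρ with
  | var i => rfl
  | lam t ih =>
    simp only [rename, subst, ih]
    congr 1
    apply congrFun
    apply congrArg
    funext i; cases i <;> rfl
  | app t u iht ihu => simp [rename, subst, iht, ihu]

/-- Key beta-composition: `(t[⇑σ])[N·id] = t[N·σ]`. -/
lemma subst0_subst_ups (σ : ℕ → Db) (N t : Db) :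
    subst0 (subst (ups σ) t) N = subst (cons N σ) t := by
  unfold subst0
  rw [subst_subst]
  congr 1
  funext i; cases i with
  | zero => rfl
  | succ j =>
    show subst (cons N var) (rename Nat.succ (σ j)) = σ j
    rw [subst_rename]
    show subst (fun i => cons N var (i+1)) (σ j) = σ j
    exact subst_var _

/-- `(t[N·id])` seen with substitutions: substitution under single subst. -/
lemma subst_subst0 (σ : ℕ → Db) (t N : Db) :
    subst σ (subst0 t N) = subst0 (subst (ups σ) t) (subst σ N) := by
  unfold subst0
  rw [subst_subst, subst_subst]
  congr 1
  funext i; cases i with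
  | zero => rfl
  | succ j =>
    show subst σ (var j) = subst (cons (subst σ N) var) (rename Nat.succ (σ j))
    rw [subst_rename]
    show σ j = subst (fun i => cons (subst σ N) var (i+1)) (σ j)
    exact (subst_var _).symm

end Db

namespace Db

/-- One-step β-reduction on de Bruijn terms. -/
inductive DStep : Db → Db → Prop
  | beta (A B : Db) : DStep (app (lam A) B) (subst0 A B)
  | appL {A A' : Db} (B : Db) : DStep A A' → DStep (app A B) (app A' B)
  | appR (A : Db) {B B' : Db} : DStep B B' → DStep (app A B) (app A B')
  | abs {A A' : Db} : DStep A A' → DStep (lam A) (lam A')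

/-- Head reduction on de Bruijn terms. -/
inductive Hd : Db → Db → Prop
  | beta (A B : Db) : Hd (app (lam A) B) (subst0 A B)
  | appL {A A' : Db} (B : Db) : (∀ C, A ≠ lam C) → Hd A A' → Hd (app A B) (app A' B)
  | abs {A A' : Db} : Hd A A' → Hd (lam A) (lam A')

/-- Head-normalizing terms. -/
inductive HN : Db → Prop
  | hnf {X : Db} : (∀ Y, ¬ Hd X Y) → HN X
  | step {X Y : Db} : Hd X Y → HN Y → HN X

lemma Hd.isApp_or_isLam {A A' : Db} (h : Hd A A') :
    (∃ B C, A = app B C) ∨ (∃ B, A = lam B) := by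
  cases h with
  | beta A B => exact Or.inl ⟨_, _, rfl⟩
  | appL B hn h => exact Or.inl ⟨_, _, rfl⟩
  | abs h => exact Or.inr ⟨_, rfl⟩

lemma Hd.subst {A A' : Db} (σ : ℕ → Db) (h : Hd A A') :
    Hd (subst σ A) (subst σ A') := by
  induction h generalizing σ with
  | beta A B =>
    show Hd (app (lam (Db.subst (ups σ) A)) (Db.subst σ B)) _
    rw [subst_subst0]
    exact Hd.beta _ _
  | appL B hn h ih =>
    refine Hd.appL _ ?_ (ih σ)
    rcases h.isApp_or_isLam with ⟨B', C', rfl⟩ | ⟨B', rfl⟩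
    · intro C hC; simp [Db.subst] at hC
    · exact absurd rfl (hn B')
  | abs h ih => exact Hd.abs (ih _)

lemma Hd.det {X Y Y' : Db} (h : Hd X Y) (h' : Hd X Y') : Y = Y' := by
  induction h generalizing Y' with
  | beta A B =>
    cases h' with
    | beta => rfl
    | appL B hn h => exact absurd rfl (hn _)
  | appL B hn h ih =>
    cases h' with
    | beta => exact absurd rfl (hn _)
    | appL B hn' h' => rw [ih h']
  | abs h ih =>
    cases h' with
    | abs h' => rw [ih h']

lemma HN.of_hd {X Y : Db} (h : HN X) (hd : Hd X Y) : HN Y := by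
  cases h with
  | hnf hn => exact absurd hd (hn _)
  | step hd' h => rwa [hd.det hd']

lemma HN.lam_intro {A : Db} (h : HN A) : HN (lam A) := by
  induction h with
  | hnf hn =>
    refine HN.hnf fun Y hY => ?_
    cases hY with | abs h => exact hn _ h
  | step hd h ih => exact HN.step (Hd.abs hd) ih

lemma HN.lam_elim {A : Db} (h : HN (lam A)) : HN A := by
  generalize hX : Db.lam A = X at h
  induction h generalizing A with
  | hnf hn =>
    subst hX
    exact HN.hnf fun Y hY => hn _ (Hd.abs hY)
  | step hd h ih =>
    subst hX
    cases hd with | abs hd' => exact HN.step hd' (ih rfl)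

lemma HN.unsubst {L : Db} (σ : ℕ → Db) (h : HN (subst σ L)) : HN L := by
  generalize hX : subst σ L = X at h
  induction h generalizing L σ with
  | hnf hn =>
    subst hX
    exact HN.hnf fun Y hY => hn _ (hY.subst σ)
  | step hd h ih =>
    subst hX
    by_cases he : ∃ L', Hd L L'
    · obtain ⟨L', hL'⟩ := he
      exact HN.step hL' (ih (L := L') (σ := σ) (((hL'.subst σ).det hd)))
    · exact HN.hnf fun Y hY => he ⟨Y, hY⟩

lemma HN.app_elim {X Y : Db} (h : HN (app X Y)) : HN X := by
  generalize hZ : Db.app X Y = Z at h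
  induction h generalizing X Y with
  | hnf hn =>
    subst hZ
    cases X with
    | var i => exact HN.hnf fun Y hY => by cases hY
    | lam A => exact absurd (Hd.beta A Y) (hn _)
    | app A B => exact HN.hnf fun W hW => hn _ (Hd.appL _ (fun C hC => by simp at hC) hW)
  | step hd h ih =>
    subst hZ
    cases hd with
    | beta A B => exact ((h.unsubst _).lam_intro)
    | appL B hn hd' => exact HN.step hd' (ih rfl)

def dapps (t : Db) (l : List Db) : Db := l.foldl app t

lemma HN.dapps_elim {X : Db} {l : List Db} (h : HN (dapps X l)) : HN X := by
  induction l generalizing X with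
  | nil => exact h
  | cons a l ih => exact (ih h).app_elim

end Db

namespace Db

inductive Ty : Type
  | base : Ty
  | arr : Ty → Ty → Ty
  | inter : Ty → Ty → Ty
  | omg : Ty

open Ty

/-- `Cmp C A`: `A` is a component of the intersection `C`. -/
inductive Cmp : Ty → Ty → Prop
  | refl (A : Ty) : Cmp A A
  | l {A C : Ty} (B : Ty) : Cmp A C → Cmp (inter A B) C
  | r (A : Ty) {B C : Ty} : Cmp B C → Cmp (inter A B) C

abbrev Ctx := ℕ → Ty

def tcons (A : Ty) (Γ : Ctx) : Ctx
  | 0 => A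
  | j+1 => Γ j

inductive Tj : Ctx → Db → Ty → Prop
  | var {Γ : Ctx} {i : ℕ} {A : Ty} : Cmp (Γ i) A → Tj Γ (var i) A
  | lam {Γ : Ctx} {M : Db} {A B : Ty} : Tj (tcons A Γ) M B → Tj Γ (lam M) (arr A B)
  | app {Γ : Ctx} {M N : Db} {A B : Ty} :
      Tj Γ M (arr A B) → Tj Γ N A → Tj Γ (app M N) B
  | inter {Γ : Ctx} {M : Db} {A B : Ty} : Tj Γ M A → Tj Γ M B → Tj Γ M (inter A B)
  | omg (Γ : Ctx) (M : Db) : Tj Γ M omg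

/-- Context strengthening order. -/
def Sub (Γ Δ : Ctx) : Prop := ∀ i A, Cmp (Δ i) A → Cmp (Γ i) A

lemma Sub.tcons {Γ Δ : Ctx} (S : Ty) (h : Sub Γ Δ) : Sub (tcons S Γ) (tcons S Δ) := by
  intro i A
  cases i with
  | zero => exact id
  | succ j => exact h j A

lemma Tj.sub {Γ Δ : Ctx} {M : Db} {A : Ty} (d : Tj Δ M A) (h : Sub Γ Δ) : Tj Γ M A := by
  induction d generalizing Γ with
  | var hc => exact Tj.var (by exact_mod_cast ‹Sub _ _› _ _ hc)
  | lam d ih => exact Tj.lam (ih (h.tcons _))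
  | app d e ihd ihe => exact Tj.app (ihd h) (ihe h)
  | inter d e ihd ihe => exact Tj.inter (ihd h) (ihe h)
  | omg Γ M => exact Tj.omg _ _

lemma Tj.rename {Γ Δ : Ctx} {M : Db} {A : Ty} (ρ : ℕ → ℕ)
    (d : Tj Γ M A) (h : ∀ i, Δ (ρ i) = Γ i) : Tj Δ (rename ρ M) A := by
  induction d generalizing Δ ρ with
  | var hc => exact Tj.var (by rw [h]; exact hc)
  | @lam Γ M A B d ih =>
    refine Tj.lam (ih (upr ρ) fun i => ?_)
    cases i with
    | zero => rfl
    | succ j => exact h j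
  | app d e ihd ihe => exact Tj.app (ihd _ h) (ihe _ h)
  | inter d e ihd ihe => exact Tj.inter (ihd _ h) (ihe _ h)
  | omg Γ M => exact Tj.omg _ _

lemma Tj.unrename {Δ : Ctx} {t : Db} {A : Ty} (d : Tj Δ t A) :
    ∀ (ρ : ℕ → ℕ) (M : Db), t = Db.rename ρ M → Tj (fun i => Δ (ρ i)) M A := by
  induction d with
  | @var Γ j A hc =>
    intro ρ M hM
    cases M with
    | var i =>
      cases hM
      exact Tj.var hc
    | lam M₀ => simp [Db.rename] at hM
    | app M₁ M₂ => simp [Db.rename] at hM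
  | @lam Γ t₀ A B d ih =>
    intro ρ M hM
    cases M with
    | var i => simp [Db.rename] at hM
    | lam M₀ =>
      simp only [Db.rename, Db.lam.injEq] at hM
      refine Tj.lam ?_
      have h0 := ih (upr ρ) M₀ hM
      have he : (fun i => tcons A Γ (upr ρ i)) = tcons A (fun i => Γ (ρ i)) := by
        funext i; cases i <;> rfl
      rwa [he] at h0
    | app M₁ M₂ => simp [Db.rename] at hM
  | @app Γ t₁ t₂ A B d e ihd ihe =>
    intro ρ M hM
    cases M with
    | var i => simp [Db.rename] at hM
    | lam M₀ => simp [Db.rename] at hM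
    | app M₁ M₂ =>
      simp only [Db.rename, Db.app.injEq] at hM
      exact Tj.app (ihd ρ M₁ hM.1) (ihe ρ M₂ hM.2)
  | inter d e ihd ihe =>
    intro ρ M hM
    exact Tj.inter (ihd ρ M hM) (ihe ρ M hM)
  | omg Γ t =>
    intro ρ M hM
    exact Tj.omg _ _

lemma Tj.var_retype {Γ : Ctx} {j : ℕ} {A : Ty} (d : Tj Γ (Db.var j) A) :
    ∀ (Γ' : Ctx) (i : ℕ), Γ' i = Γ j → Tj Γ' (Db.var i) A := by
  generalize ht : Db.var j = t at d
  induction d with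
  | var hc =>
    cases ht
    intro Γ' i h
    exact Tj.var (h ▸ hc)
  | lam d ih => cases ht
  | app d e ihd ihe => cases ht
  | inter d e ihd ihe =>
    intro Γ' i h
    exact Tj.inter (ihd ht Γ' i h) (ihe ht Γ' i h)
  | omg Γ M => intro Γ' i h; exact Tj.omg _ _

def upsn : ℕ → (ℕ → Db) → (ℕ → Db)
  | 0, σ => σ
  | k+1, σ => ups (upsn k σ)

lemma subst_upsn_lam (σ : ℕ → Db) (k : ℕ) (M : Db) :
    subst (upsn k σ) (Db.lam M) = Db.lam (subst (upsn (k+1) σ) M) := rfl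

lemma rename_congr {ρ ρ' : ℕ → ℕ} (t : Db) (h : ∀ i, ρ i = ρ' i) :
    Db.rename ρ t = Db.rename ρ' t := by
  have : ρ = ρ' := funext h
  rw [this]

lemma rename_id (t : Db) : Db.rename (fun i => i) t = t := by
  rw [rename_eq_subst]
  exact subst_var t

lemma upsn_lt {σ : ℕ → Db} {k i : ℕ} (h : i < k) : upsn k σ i = Db.var i := by
  induction k generalizing i with
  | zero => omega
  | succ k ih =>
    cases i with
    | zero => rfl
    | succ j =>
      show Db.rename Nat.succ (upsn k σ j) = Db.var (j+1)
      rw [ih (by omega)]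
      rfl

lemma upsn_cons_self (N : Db) (k : ℕ) :
    upsn k (cons N var) k = Db.rename (fun j => j + k) N := by
  induction k with
  | zero =>
    show N = Db.rename (fun j => j + 0) N
    exact (rename_id N).symm
  | succ k ih =>
    show Db.rename Nat.succ (upsn k (cons N var) k) = _
    rw [ih, rename_rename]
    exact rename_congr _ (fun i => by simp [Function.comp]; omega)

lemma upsn_cons_gt {N : Db} {k i : ℕ} (h : k < i) :
    upsn k (cons N var) i = Db.var (i - 1) := by
  induction k generalizing i with
  | zero =>
    cases i with
    | zero => omega
    | succ j => rfl
  | succ k ih =>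
    cases i with
    | zero => omega
    | succ j =>
      show Db.rename Nat.succ (upsn k (cons N var) j) = Db.var (j + 1 - 1)
      rw [ih (by omega)]
      show Db.var (j - 1 + 1) = Db.var j
      congr 1
      omega

def insCtx (k : ℕ) (C : Ty) (Γ : Ctx) : Ctx :=
  fun i => if i < k then Γ i else if i = k then C else Γ (i - 1)

lemma insCtx_zero (C : Ty) (Γ : Ctx) : insCtx 0 C Γ = tcons C Γ := by
  funext i
  cases i with
  | zero => rfl
  | succ j => simp [insCtx, tcons]

lemma insCtx_succ (k : ℕ) (C S : Ty) (Γ : Ctx) :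
    insCtx (k+1) C (tcons S Γ) = tcons S (insCtx k C Γ) := by
  funext i
  cases i with
  | zero => simp [insCtx, tcons]
  | succ j =>
    simp only [insCtx, tcons]
    rcases lt_trichotomy j k with h | h | h
    · simp [h, Nat.succ_lt_succ h]
    · subst h; simp
    · have h1 : ¬ (j < k) := by omega
      have h2 : ¬ (j + 1 < k + 1) := by omega
      have h3 : j ≠ k := by omega
      have h4 : j + 1 ≠ k + 1 := by omega
      simp only [h1, h2, h3, h4, if_false]
      have : j + 1 - 1 = j := by omega
      rw [this]
      cases j with
      | zero => omega
      | succ m =>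
        show Γ (m + 1 - 1) = Γ m
        congr 1

/-- The inserted-context strengthening. -/
lemma sub_insCtx_inter_left (k : ℕ) (C₁ C₂ : Ty) (Γ : Ctx) :
    Sub (insCtx k (inter C₁ C₂) Γ) (insCtx k C₁ Γ) := by
  intro i A
  simp only [insCtx]
  rcases lt_trichotomy i k with h | h | h
  · simp [h]
  · subst h; simp; exact fun hc => Cmp.l _ hc
  · have h1 : ¬ (i < k) := by omega
    have h2 : i ≠ k := by omega
    simp [h1, h2]

lemma sub_insCtx_inter_right (k : ℕ) (C₁ C₂ : Ty) (Γ : Ctx) :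
    Sub (insCtx k (inter C₁ C₂) Γ) (insCtx k C₂ Γ) := by
  intro i A
  simp only [insCtx]
  rcases lt_trichotomy i k with h | h | h
  · simp [h]
  · subst h; simp; exact fun hc => Cmp.r _ hc
  · have h1 : ¬ (i < k) := by omega
    have h2 : i ≠ k := by omega
    simp [h1, h2]

/-- Anti-substitution for variables. -/
lemma anti_subst_var {Γ : Ctx} {A : Ty} {N : Db} (i k : ℕ)
    (d : Tj Γ (subst (upsn k (cons N var)) (Db.var i)) A) :
    ∃ C, Tj (fun j => Γ (j + k)) N C ∧ Tj (insCtx k C Γ) (Db.var i) A := by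
  rcases lt_trichotomy i k with h | h | h
  · refine ⟨omg, Tj.omg _ _, ?_⟩
    have hd : subst (upsn k (cons N var)) (Db.var i) = Db.var i := upsn_lt h
    rw [hd] at d
    exact d.var_retype _ _ (by simp [insCtx, h])
  · subst h
    have hd : subst (upsn i (cons N var)) (Db.var i) = Db.rename (fun j => j + i) N :=
      upsn_cons_self N i
    rw [hd] at d
    refine ⟨A, d.unrename _ _ rfl, Tj.var ?_⟩
    simp only [insCtx, lt_irrefl, if_false, if_pos rfl]
    exact Cmp.refl A
  · refine ⟨omg, Tj.omg _ _, ?_⟩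
    have hd : subst (upsn k (cons N var)) (Db.var i) = Db.var (i - 1) := upsn_cons_gt h
    rw [hd] at d
    refine d.var_retype _ _ ?_
    have h1 : ¬ (i < k) := by omega
    have h2 : i ≠ k := by omega
    simp [insCtx, h1, h2]

/-- Anti-substitution. -/
lemma anti_subst {Γ : Ctx} {t : Db} {A : Ty} (d : Tj Γ t A) :
    ∀ (N M : Db) (k : ℕ), t = subst (upsn k (cons N var)) M →
    ∃ C, Tj (fun j => Γ (j + k)) N C ∧ Tj (insCtx k C Γ) M A := by
  induction d with
  | @var Γ j A hc =>
    intro N M k hM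
    cases M with
    | var i => exact anti_subst_var i k (hM ▸ Tj.var hc)
    | lam M₀ => rw [subst_upsn_lam] at hM; cases hM
    | app M₁ M₂ => simp [subst] at hM
  | @lam Γ t₀ S B d ih =>
    intro N M k hM
    cases M with
    | var i => exact anti_subst_var i k (hM ▸ Tj.lam d)
    | lam M₀ =>
      rw [subst_upsn_lam] at hM
      cases hM
      obtain ⟨C, hN, hM₀⟩ := ih N M₀ (k+1) rfl
      refine ⟨C, ?_, ?_⟩
      · have he : (fun j => tcons S Γ (j + (k+1))) = fun j => Γ (j + k) := by
          funext j
          show Γ (j + k) = Γ (j + k)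
          rfl
        rwa [he] at hN
      · rw [insCtx_succ] at hM₀
        exact Tj.lam hM₀
    | app M₁ M₂ => simp [subst] at hM
  | @app Γ t₁ t₂ S B d e ihd ihe =>
    intro N M k hM
    cases M with
    | var i => exact anti_subst_var i k (hM ▸ Tj.app d e)
    | lam M₀ => rw [subst_upsn_lam] at hM; cases hM
    | app M₁ M₂ =>
      simp only [subst, Db.app.injEq] at hM
      obtain ⟨C₁, hN₁, hM₁⟩ := ihd N M₁ k hM.1
      obtain ⟨C₂, hN₂, hM₂⟩ := ihe N M₂ k hM.2
      exact ⟨inter C₁ C₂, Tj.inter hN₁ hN₂,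
        Tj.app (hM₁.sub (sub_insCtx_inter_left _ _ _ _))
          (hM₂.sub (sub_insCtx_inter_right _ _ _ _))⟩
  | @inter Γ t A B d e ihd ihe =>
    intro N M k hM
    obtain ⟨C₁, hN₁, hM₁⟩ := ihd N M k hM
    obtain ⟨C₂, hN₂, hM₂⟩ := ihe N M k hM
    exact ⟨inter C₁ C₂, Tj.inter hN₁ hN₂,
      Tj.inter (hM₁.sub (sub_insCtx_inter_left _ _ _ _))
        (hM₂.sub (sub_insCtx_inter_right _ _ _ _))⟩
  | omg Γ t =>
    intro N M k hM
    exact ⟨omg, Tj.omg _ _, Tj.omg _ _⟩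

lemma anti_subst0 {Γ : Ctx} {A : Ty} {M N : Db} (d : Tj Γ (subst0 M N) A) :
    ∃ C, Tj Γ N C ∧ Tj (tcons C Γ) M A := by
  obtain ⟨C, hN, hM⟩ := anti_subst d N M 0 rfl
  rw [insCtx_zero] at hM
  exact ⟨C, hN, hM⟩

/-- Subject expansion. -/
lemma subject_expansion {X Y : Db} (s : DStep X Y) :
    ∀ {Γ : Ctx} {A : Ty}, Tj Γ Y A → Tj Γ X A := by
  induction s with
  | beta A B =>
    intro Γ T d
    obtain ⟨C, hB, hA⟩ := anti_subst0 d
    exact Tj.app (Tj.lam hA) hB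
  | @appL A A' B s ih =>
    intro Γ T d
    generalize ht : Db.app A' B = t at d
    induction d with
    | var hc => cases ht
    | lam d ihd => cases ht
    | app d e ihd ihe =>
      cases ht
      exact Tj.app (ih d) e
    | inter d e ihd ihe => exact Tj.inter (ihd ht) (ihe ht)
    | omg Γ M => exact Tj.omg _ _
  | @appR A B B' s ih =>
    intro Γ T d
    generalize ht : Db.app A B' = t at d
    induction d with
    | var hc => cases ht
    | lam d ihd => cases ht
    | app d e ihd ihe =>
      cases ht
      exact Tj.app d (ih e)
    | inter d e ihd ihe => exact Tj.inter (ihd ht) (ihe ht)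
    | omg Γ M => exact Tj.omg _ _
  | @abs A A' s ih =>
    intro Γ T d
    generalize ht : Db.lam A' = t at d
    induction d with
    | var hc => cases ht
    | lam d ihd =>
      cases ht
      exact Tj.lam (ih d)
    | app d e ihd ihe => cases ht
    | inter d e ihd ihe => exact Tj.inter (ihd ht) (ihe ht)
    | omg Γ M => exact Tj.omg _ _

lemma subject_expansion_red {X Y : Db} (s : Relation.ReflTransGen DStep X Y)
    {Γ : Ctx} {A : Ty} (d : Tj Γ Y A) : Tj Γ X A := by
  induction s using Relation.ReflTransGen.head_induction_on with
  | refl => exact d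
  | head s _ ih => exact subject_expansion s ih

end Db

namespace Db

open Ty

lemma dapps_snoc (t a : Db) (l : List Db) :
    dapps t (l ++ [a]) = app (dapps t l) a := by
  simp [dapps]

/-- Var-headed terms. -/
inductive VarHead : Db → Prop
  | var (i : ℕ) : VarHead (var i)
  | app {X : Db} (Y : Db) : VarHead X → VarHead (app X Y)

lemma VarHead.not_hd {X : Db} (h : VarHead X) : ∀ Y, ¬ Hd X Y := by
  induction h with
  | var i => intro Y hY; cases hY
  | app Y h ih =>
    intro Z hZ
    cases hZ with
    | beta A B => cases h
    | appL B hn hd => exact ih _ hd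

lemma VarHead.dapps {X : Db} (h : VarHead X) (l : List Db) : VarHead (dapps X l) := by
  induction l generalizing X with
  | nil => exact h
  | cons a l ih => exact ih (h.app a)

lemma Hd.dapps {X X' : Db} (h : Hd X X') (hX : ∃ A B, X = app A B) (l : List Db) :
    Hd (dapps X l) (dapps X' l) := by
  induction l generalizing X X' with
  | nil => exact h
  | cons a l ih =>
    refine ih (X := app X a) (X' := app X' a) ?_ ⟨_, _, rfl⟩
    obtain ⟨A, B, rfl⟩ := hX
    exact Hd.appL a (fun C hC => by simp at hC) h

lemma HN.head_exp {A B : Db} (l : List Db) (h : HN (dapps (subst0 A B) l)) :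
    HN (dapps (app (lam A) B) l) :=
  HN.step ((Hd.beta A B).dapps ⟨_, _, rfl⟩ l) h

/-- Saturated sets of terms. -/
def Sat (S : Set Db) : Prop :=
  (∀ i l, dapps (Db.var i) l ∈ S) ∧
  (∀ A B l, dapps (subst0 A B) l ∈ S → dapps (app (lam A) B) l ∈ S)

def interp : Ty → Set Db
  | base => {M | HN M}
  | arr A B => {M | ∀ N ∈ interp A, app M N ∈ interp B}
  | inter A B => interp A ∩ interp B
  | omg => Set.univ

lemma sat_interp : ∀ A : Ty, Sat (interp A) := by
  intro A
  induction A with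
  | base =>
    constructor
    · intro i l
      exact HN.hnf ((VarHead.var i).dapps l).not_hd
    · intro A B l h
      exact h.head_exp l
  | arr A B ihA ihB =>
    constructor
    · intro i l N hN
      have := ihB.1 i (l ++ [N])
      rwa [dapps_snoc] at this
    · intro A' B' l h N hN
      have h2 := h N hN
      rw [← dapps_snoc] at h2 ⊢
      exact ihB.2 A' B' (l ++ [N]) h2
  | inter A B ihA ihB =>
    exact ⟨fun i l => ⟨ihA.1 i l, ihB.1 i l⟩,
      fun A' B' l h => ⟨ihA.2 A' B' l h.1, ihB.2 A' B' l h.2⟩⟩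
  | omg => exact ⟨fun _ _ => trivial, fun _ _ _ _ => trivial⟩

lemma interp_cmp {C A : Ty} (h : Cmp C A) : interp C ⊆ interp A := by
  induction h with
  | refl A => exact le_refl _
  | l B h ih => exact fun M hM => ih hM.1
  | r A h ih => exact fun M hM => ih hM.2

lemma adequacy {Γ : Ctx} {M : Db} {A : Ty} (d : Tj Γ M A) :
    ∀ σ : ℕ → Db, (∀ i, σ i ∈ interp (Γ i)) → subst σ M ∈ interp A := by
  induction d with
  | @var Γ i A hc =>
    intro σ hσ
    exact interp_cmp hc (hσ i)
  | @lam Γ M S B d ih =>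
    intro σ hσ
    intro N hN
    have key : subst (cons N σ) M ∈ interp B := by
      refine ih (cons N σ) fun i => ?_
      cases i with
      | zero => exact hN
      | succ j => exact hσ j
    have h2 : dapps (subst0 (subst (ups σ) M) N) [] ∈ interp B := by
      show subst0 (subst (ups σ) M) N ∈ interp B
      rwa [subst0_subst_ups]
    exact (sat_interp B).2 _ _ [] h2
  | app d e ihd ihe =>
    intro σ hσ
    exact ihd σ hσ _ (ihe σ hσ)
  | inter d e ihd ihe =>
    intro σ hσ
    exact ⟨ihd σ hσ, ihe σ hσ⟩
  | omg Γ M =>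
    intro σ hσ
    trivial

/-- Typable at `base → base` implies head normalizing. -/
lemma Tj.hn {Γ : Ctx} {X : Db} (d : Tj Γ X (arr base base)) : HN X := by
  have hX : X ∈ interp (arr base base) := by
    have := adequacy d Db.var (fun i => (sat_interp (Γ i)).1 i [])
    rwa [subst_var] at this
  have h0 : Db.var 0 ∈ interp base := (sat_interp base).1 0 []
  exact (hX _ h0).app_elim

/-- The key theorem on de Bruijn terms: a term that β-reduces to the identity
is head normalizing. -/
theorem hn_of_red_id {X : Db} (h : Relation.ReflTransGen DStep X (lam (var 0))) :
    HN X := by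
  refine Tj.hn (Γ := fun _ => omg) (subject_expansion_red h ?_)
  exact Tj.lam (Tj.var (Cmp.refl base))

end Db


open Db in
/-- Translation of named terms to de Bruijn terms, under an environment. -/
def Tm.toDb (ρ : ℕ → ℕ) : Tm → Db
  | Tm.var x => Db.var (ρ x)
  | Tm.lam x t => Db.lam (Tm.toDb (fun z => if z = x then 0 else ρ z + 1) t)
  | Tm.app t u => Db.app (Tm.toDb ρ t) (Tm.toDb ρ u)

namespace Tm

lemma fresh_not_mem (s : Finset ℕ) : fresh s ∉ s := by
  intro h
  have h2 : id (fresh s) ≤ s.sup id := Finset.le_sup h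
  simp only [id] at h2
  simp only [fresh] at h2
  omega

lemma toDb_rename {t : Tm} {ρ ρ' : ℕ → ℕ} {r : ℕ → ℕ}
    (h : ∀ z ∈ t.fv, ρ' z = r (ρ z)) :
    toDb ρ' t = Db.rename r (toDb ρ t) := by
  induction t generalizing ρ ρ' r with
  | var x =>
    show Db.var (ρ' x) = Db.var (r (ρ x))
    rw [h x (by simp [fv])]
  | lam x t ih =>
    show Db.lam _ = Db.lam _
    congr 1
    refine ih fun z hz => ?_
    by_cases hzx : z = x
    · simp [hzx, Db.upr]
    · have hzf : z ∈ (lam x t).fv := by simp [fv, hzx, hz]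
      simp only [hzx, if_false]
      rw [h z hzf]
      rfl
  | app t u iht ihu =>
    show Db.app _ _ = Db.app _ _
    rw [iht fun z hz => h z (by simp [fv, hz]),
        ihu fun z hz => h z (by simp [fv, hz])]

lemma toDb_subst {t : Tm} {σ : ℕ → Tm} {ρ ρh : ℕ → ℕ} {σh : ℕ → Db}
    (h : ∀ z ∈ t.fv, σh (ρh z) = toDb ρ (σ z)) :
    toDb ρ (subst σ t) = Db.subst σh (toDb ρh t) := by
  induction t generalizing σ ρ ρh σh with
  | var x => exact (h x (by simp [fv])).symm
  | app t u iht ihu =>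
    show Db.app _ _ = Db.app _ _
    rw [iht fun z hz => h z (by simp [fv, hz]),
        ihu fun z hz => h z (by simp [fv, hz])]
  | lam x t ih =>
    show Db.lam _ = Db.lam _
    refine congrArg _ (ih fun z hz => ?_)
    by_cases hzx : z = x
    · subst hzx
      simp [Tm.toDb, Db.ups]
    · have hzf : z ∈ (lam x t).fv := by simp [fv, hzx, hz]
      simp only [hzx, if_false]
      show Db.rename Nat.succ (σh (ρh z)) = toDb _ (σ z)
      rw [h z hzf]
      refine (toDb_rename fun w hw => ?_).symm
      have hfresh : fresh ((fv t \ {x}).biUnion fun w => fv (σ w)) ≠ w := by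
        intro he
        refine fresh_not_mem ((fv t \ {x}).biUnion fun w => fv (σ w)) ?_
        rw [he]
        exact Finset.mem_biUnion.2 ⟨z, by simp [hz, hzx], hw⟩
      simp [hfresh.symm]

lemma toDb_subst1 (ρ : ℕ → ℕ) (x : ℕ) (N M : Tm) :
    toDb ρ (subst1 x N M) =
      Db.subst0 (toDb (fun z => if z = x then 0 else ρ z + 1) M) (toDb ρ N) := by
  refine toDb_subst fun z hz => ?_
  by_cases hzx : z = x
  · simp [hzx, Db.cons]
  · simp only [hzx, if_false]
    show Db.var (ρ z) = toDb ρ (Tm.var z)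
    rfl

lemma toDb_step {M N : Tm} (s : Step M N) (ρ : ℕ → ℕ) :
    Db.DStep (toDb ρ M) (toDb ρ N) := by
  induction s generalizing ρ with
  | beta x M N =>
    rw [toDb_subst1]
    exact Db.DStep.beta _ _
  | appL N s ih => exact Db.DStep.appL _ (ih ρ)
  | appR M s ih => exact Db.DStep.appR _ (ih ρ)
  | abs x s ih => exact Db.DStep.abs (ih _)

lemma toDb_red {M N : Tm} (s : Red M N) (ρ : ℕ → ℕ) :
    Relation.ReflTransGen Db.DStep (toDb ρ M) (toDb ρ N) := by
  induction s with
  | refl => exact Relation.ReflTransGen.refl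
  | tail _ s ih => exact ih.tail (toDb_step s ρ)

lemma toDb_apps (ρ : ℕ → ℕ) (t : Tm) (l : List Tm) :
    toDb ρ (apps t l) = Db.dapps (toDb ρ t) (l.map (toDb ρ)) := by
  induction l generalizing t with
  | nil => rfl
  | cons a l ih => exact ih (app t a)

lemma toDb_headstep {M N : Tm} (s : HeadStep M N) (ρ : ℕ → ℕ) :
    Db.Hd (toDb ρ M) (toDb ρ N) := by
  induction s generalizing ρ with
  | beta x M N Ms =>
    rw [toDb_apps, toDb_apps, toDb_subst1]
    exact (Db.Hd.beta _ _).dapps ⟨_, _, rfl⟩ _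
  | abs x s ih => exact Db.Hd.abs (ih _)

/-- Pulling head-normalization back along the translation. -/
lemma head_terminates_of_hn {X : Db} (h : Db.HN X) :
    ∀ (M : Tm) (ρ : ℕ → ℕ), toDb ρ M = X →
    ∃ N : Tm, Relation.ReflTransGen HeadStep M N ∧ ∀ P : Tm, ¬ HeadStep N P := by
  induction h with
  | @hnf X hn =>
    intro M ρ hM
    subst hM
    by_cases he : ∃ M', HeadStep M M'
    · obtain ⟨M', hM'⟩ := he
      exact absurd (toDb_headstep hM' ρ) (hn _)
    · exact ⟨M, Relation.ReflTransGen.refl, fun P hP => he ⟨P, hP⟩⟩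
  | @step X Y hd h ih =>
    intro M ρ hM
    subst hM
    by_cases he : ∃ M', HeadStep M M'
    · obtain ⟨M', hM'⟩ := he
      obtain ⟨N, hN, hterm⟩ := ih M' ρ ((toDb_headstep hM' ρ).det hd)
      exact ⟨N, Relation.ReflTransGen.head hM' hN, hterm⟩
    · exact ⟨M, Relation.ReflTransGen.refl, fun P hP => he ⟨P, hP⟩⟩

end Tm

namespace Tm

/-! ### Basic lemmas about `apps`, `lams`, `Red` -/

lemma apps_cons (t a : Tm) (l : List Tm) : apps t (a :: l) = apps (app t a) l := rfl

lemma apps_snoc (t a : Tm) (l : List Tm) : apps t (l ++ [a]) = app (apps t l) a := by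
  simp [apps]

lemma lams_cons (x : ℕ) (xs : List ℕ) (t : Tm) :
    lams (x :: xs) t = lam x (lams xs t) := rfl

lemma lams_append (xs ys : List ℕ) (t : Tm) :
    lams (xs ++ ys) t = lams xs (lams ys t) := by
  simp [lams]

lemma Step.apps {a b : Tm} (s : Step a b) (l : List Tm) :
    Step (apps a l) (apps b l) := by
  induction l generalizing a b with
  | nil => exact s
  | cons x l ih => exact ih (Step.appL x s)

lemma HeadStep.step {M N : Tm} (s : HeadStep M N) : Step M N := by
  induction s with
  | beta x M N Ms => exact (Step.beta x M N).apps Ms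
  | abs x s ih => exact Step.abs x ih

lemma Red.of_head {M N : Tm} (s : Relation.ReflTransGen HeadStep M N) : Red M N := by
  induction s with
  | refl => exact Relation.ReflTransGen.refl
  | tail _ s ih => exact ih.tail s.step

lemma Red.lam_congr {M N : Tm} (x : ℕ) (s : Red M N) : Red (lam x M) (lam x N) := by
  induction s with
  | refl => exact Relation.ReflTransGen.refl
  | tail _ s ih => exact ih.tail (Step.abs x s)

lemma Red.lams_congr {M N : Tm} (xs : List ℕ) (s : Red M N) :
    Red (lams xs M) (lams xs N) := by
  induction xs with
  | nil => exact s
  | cons x xs ih => exact ih.lam_congr x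

lemma Red.apps_congr {M N : Tm} (l : List Tm) (s : Red M N) :
    Red (apps M l) (apps N l) := by
  induction s with
  | refl => exact Relation.ReflTransGen.refl
  | tail _ s ih => exact ih.tail (s.apps l)

/-! ### Free variables lemmas -/

lemma fv_subst (σ : ℕ → Tm) (t : Tm) :
    fv (subst σ t) ⊆ t.fv.biUnion fun z => fv (σ z) := by
  induction t generalizing σ with
  | var x => simp [subst, fv]
  | app t u iht ihu =>
    intro w hw
    rcases Finset.mem_union.1 hw with h | h
    · obtain ⟨z, hz, hw⟩ := Finset.mem_biUnion.1 (iht σ h)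
      exact Finset.mem_biUnion.2 ⟨z, by simp [fv, hz], hw⟩
    · obtain ⟨z, hz, hw⟩ := Finset.mem_biUnion.1 (ihu σ h)
      exact Finset.mem_biUnion.2 ⟨z, by simp [fv, hz], hw⟩
  | lam x t ih =>
    intro w hw
    obtain ⟨hw1, hw2⟩ := Finset.mem_sdiff.1 hw
    obtain ⟨z, hz, hwz⟩ := Finset.mem_biUnion.1 (ih _ hw1)
    by_cases hzx : z = x
    · subst hzx
      simp only [if_pos rfl] at hwz
      simp only [fv, Finset.mem_singleton] at hwz ⊢
      exact absurd hwz (by simpa [fv] using hw2)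
    · simp only [hzx, if_false] at hwz
      exact Finset.mem_biUnion.2 ⟨z, by simp [fv, hz, hzx], hwz⟩

lemma fv_step {M N : Tm} (s : Step M N) : fv N ⊆ fv M := by
  induction s with
  | beta x M N =>
    intro w hw
    obtain ⟨z, hz, hwz⟩ := Finset.mem_biUnion.1 (fv_subst _ _ hw)
    simp only [fv]
    by_cases hzx : z = x
    · subst hzx
      simp only [if_pos rfl] at hwz
      exact Finset.mem_union.2 (Or.inr hwz)
    · simp only [hzx, if_false, fv, Finset.mem_singleton] at hwz
      subst hwz
      exact Finset.mem_union.2 (Or.inl (Finset.mem_sdiff.2 ⟨hz, by simp [hzx]⟩))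
  | appL N s ih =>
    intro w hw
    rcases Finset.mem_union.1 hw with h | h
    · exact Finset.mem_union.2 (Or.inl (ih h))
    · exact Finset.mem_union.2 (Or.inr h)
  | appR M s ih =>
    intro w hw
    rcases Finset.mem_union.1 hw with h | h
    · exact Finset.mem_union.2 (Or.inl h)
    · exact Finset.mem_union.2 (Or.inr (ih h))
  | abs x s ih =>
    intro w hw
    obtain ⟨h1, h2⟩ := Finset.mem_sdiff.1 hw
    exact Finset.mem_sdiff.2 ⟨ih h1, h2⟩

lemma fv_red {M N : Tm} (s : Red M N) : fv N ⊆ fv M := by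
  induction s with
  | refl => exact Finset.Subset.refl _
  | tail _ s ih => exact (fv_step s).trans ih

lemma mem_fv_lams {a : ℕ} (zs : List ℕ) (t : Tm) :
    a ∈ fv (lams zs t) ↔ a ∈ fv t ∧ a ∉ zs := by
  induction zs with
  | nil => simp [lams]
  | cons z zs ih =>
    rw [lams_cons]
    show a ∈ fv (lams zs t) \ {z} ↔ _
    rw [Finset.mem_sdiff, ih]
    simp only [Finset.mem_singleton, List.mem_cons]
    tauto

lemma mem_fv_apps {a : ℕ} {t : Tm} (l : List Tm) (h : a ∈ fv t) :
    a ∈ fv (apps t l) := by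
  induction l generalizing t with
  | nil => exact h
  | cons b l ih =>
    rw [apps_cons]
    exact ih (Finset.mem_union.2 (Or.inl h))

/-! ### Head-normal forms -/

lemma progress {N : Tm} (h : ∀ P, ¬ HeadStep N P) :
    ∃ (zs : List ℕ) (v : ℕ) (Ps : List Tm), N = lams zs (apps (var v) Ps) := by
  induction N with
  | var x => exact ⟨[], x, [], rfl⟩
  | lam x T ih =>
    obtain ⟨zs, v, Ps, rfl⟩ := ih fun P hP => h _ (HeadStep.abs x hP)
    exact ⟨x :: zs, v, Ps, rfl⟩
  | app A B ihA ihB =>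
    by_cases he : ∃ A', HeadStep A A'
    · obtain ⟨A', hA'⟩ := he
      exfalso
      cases hA' with
      | beta x M₀ N₀ Ms =>
        apply h (apps (subst1 x N₀ M₀) (Ms ++ [B]))
        have heq : app (apps (app (lam x M₀) N₀) Ms) B =
            apps (app (lam x M₀) N₀) (Ms ++ [B]) := (apps_snoc _ _ _).symm
        rw [heq]
        exact HeadStep.beta x M₀ N₀ (Ms ++ [B])
      | @abs x M M' hM =>
        exact h _ (HeadStep.beta x M B [])
    · obtain ⟨zs, v, Ps, hA⟩ := ihA fun P hP => he ⟨P, hP⟩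
      cases zs with
      | nil =>
        refine ⟨[], v, Ps ++ [B], ?_⟩
        rw [hA]
        show app (apps (var v) Ps) B = apps (var v) (Ps ++ [B])
        exact (apps_snoc _ _ _).symm
      | cons z zs =>
        exfalso
        subst hA
        exact h _ (HeadStep.beta z (lams zs (apps (var v) Ps)) B [])

/-! ### The solving combinators -/

/-- `λ1…1.λ1.1` with `j` dummy abstractions. -/
def Uc (j : ℕ) : Tm := lams (List.replicate j 1) (lam 1 (var 1))

lemma subst_lam_eq (σ : ℕ → Tm) (x : ℕ) (t : Tm) :
    subst σ (lam x t) =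
      lam (fresh ((fv t \ {x}).biUnion fun z => fv (σ z)))
        (subst (fun z => if z = x then var (fresh ((fv t \ {x}).biUnion fun z => fv (σ z)))
          else σ z) t) := rfl

lemma fv_Uc (j : ℕ) : fv (Uc j) = ∅ := by
  induction j with
  | zero =>
    show fv (lam 1 (var 1)) = ∅
    simp [fv]
  | succ j ih =>
    show fv (lam 1 (Uc j)) = ∅
    simp [fv, ih]

lemma subst_Uc (σ : ℕ → Tm) (j : ℕ) : subst σ (Uc j) = Uc j := by
  induction j generalizing σ with
  | zero =>
    show subst σ (lam 1 (var 1)) = lam 1 (var 1)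
    rw [subst_lam_eq]
    have h1 : (fv (var 1) \ {1}) = ∅ := by simp [fv]
    rw [h1]
    simp [fresh, subst]
  | succ j ih =>
    show subst σ (lam 1 (Uc j)) = lam 1 (Uc j)
    rw [subst_lam_eq]
    have h1 : (fv (Uc j) \ {1}) = ∅ := by simp [fv_Uc]
    rw [h1]
    simp only [Finset.biUnion_empty]
    rw [ih]
    rfl

lemma Uc_succ (j : ℕ) : Uc (j+1) = lam 1 (Uc j) := rfl

lemma red_Uc_apps (m : ℕ) : ∀ (Qs : List Tm), Qs.length = m →
    Red (apps (Uc m) Qs) (lam 1 (var 1)) := by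
  induction m with
  | zero =>
    rintro ⟨⟩ h
    · exact Relation.ReflTransGen.refl
    · simp at h
  | succ m ih =>
    rintro (⟨⟩ | ⟨Q, Qs⟩) h
    · simp at h
    · simp only [List.length_cons, Nat.succ_inj] at h
      rw [Uc_succ, apps_cons]
      refine Relation.ReflTransGen.head ((Step.beta 1 (Uc m) Q).apps Qs) ?_
      have : subst1 1 Q (Uc m) = Uc m := subst_Uc _ m
      rw [this]
      exact ih Qs h
end Tm

namespace Tm

lemma subst_apps (σ : ℕ → Tm) (t : Tm) (l : List Tm) :
    subst σ (apps t l) = apps (subst σ t) (l.map (subst σ)) := by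
  induction l generalizing t with
  | nil => rfl
  | cons a l ih => exact ih (app t a)

/-- Canonical substitution lemma: substituting into `λws. H Q⃗` yields a term
of the same shape, with full tracking of the head. -/
lemma csl (U : Tm) (hU : ∀ σ, subst σ U = U) :
    ∀ (ws : List ℕ) (H : Tm) (Qs : List Tm) (σ : ℕ → Tm),
    ∃ (ws' : List ℕ) (H' : Tm) (Qs' : List Tm),
      subst σ (lams ws (apps H Qs)) = lams ws' (apps H' Qs') ∧
      ws'.length = ws.length ∧ Qs'.length = Qs.length ∧
      (H = U → H' = U) ∧
      (∀ h, H = var h → h ∈ ws → ∃ v, H' = var v ∧ v ∈ ws') ∧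
      (∀ h, H = var h → h ∉ ws → H' = σ h) := by
  intro ws
  induction ws with
  | nil =>
    intro H Qs σ
    refine ⟨[], subst σ H, Qs.map (subst σ), subst_apps σ H Qs, rfl, by simp, ?_, ?_, ?_⟩
    · rintro rfl; exact hU σ
    · rintro h rfl hmem; simp at hmem
    · rintro h rfl _; rfl
  | cons w ws ih =>
    intro H Qs σ
    obtain ⟨ws', H', Qs', heq, hlw, hlq, hbU, hbin, hbout⟩ :=
      ih H Qs (fun z => if z = w then
        var (fresh ((fv (lams ws (apps H Qs)) \ {w}).biUnion fun z => fv (σ z)))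
        else σ z)
    refine ⟨fresh ((fv (lams ws (apps H Qs)) \ {w}).biUnion fun z => fv (σ z)) :: ws',
      H', Qs', ?_, by simp [hlw], hlq, hbU, ?_, ?_⟩
    · rw [lams_cons, subst_lam_eq, heq, lams_cons]
    · intro h hH hmem
      by_cases hin : h ∈ ws
      · obtain ⟨v, hv, hvmem⟩ := hbin h hH hin
        exact ⟨v, hv, List.mem_cons_of_mem _ hvmem⟩
      · have hw : h = w := by
          rcases List.mem_cons.1 hmem with h' | h'
          · exact h'
          · exact absurd h' hin
        refine ⟨_, ?_, List.mem_cons_self⟩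
        rw [hbout h hH hin]
        simp [hw]
    · intro h hH hmem
      have h1 : h ∉ ws := fun hc => hmem (List.mem_cons_of_mem _ hc)
      have h2 : h ≠ w := fun hc => hmem (hc ▸ List.mem_cons_self)
      rw [hbout h hH h1]
      simp [h2]

/-- Peeling off the outer abstractions by applying to copies of `Uc m`. -/
lemma peel (m : ℕ) : ∀ (n : ℕ) (ws : List ℕ) (H : Tm) (Qs : List Tm),
    ws.length = n → Qs.length = m →
    (H = Uc m ∨ ∃ v, H = var v ∧ v ∈ ws) →
    Red (apps (lams ws (apps H Qs)) (List.replicate n (Uc m))) (lam 1 (var 1)) := by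
  intro n
  induction n with
  | zero =>
    intro ws H Qs hw hQ hinv
    rcases List.length_eq_zero_iff.1 hw with rfl
    rcases hinv with rfl | ⟨v, rfl, hmem⟩
    · exact red_Uc_apps m Qs hQ
    · simp at hmem
  | succ n ih =>
    rintro (⟨⟩ | ⟨w, ws⟩) H Qs hw hQ hinv
    · simp at hw
    · simp only [List.length_cons, Nat.succ_inj] at hw
      obtain ⟨ws', H', Qs', heq, hlw, hlq, hbU, hbin, hbout⟩ :=
        csl (Uc m) (fun σ => subst_Uc σ m) ws H Qs
          (fun z => if z = w then Uc m else var z)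
      have hstep : Step (app (lam w (lams ws (apps H Qs))) (Uc m))
          (lams ws' (apps H' Qs')) := by
        have hb := Step.beta w (lams ws (apps H Qs)) (Uc m)
        rwa [show subst1 w (Uc m) (lams ws (apps H Qs)) = lams ws' (apps H' Qs')
          from heq] at hb
      have hinv' : H' = Uc m ∨ ∃ v, H' = var v ∧ v ∈ ws' := by
        rcases hinv with rfl | ⟨v, rfl, hmem⟩
        · exact Or.inl (hbU rfl)
        · by_cases hin : v ∈ ws
          · exact Or.inr (hbin v rfl hin)
          · have hvw : v = w := by
              rcases List.mem_cons.1 hmem with h' | h'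
              · exact h'
              · exact absurd h' hin
            left
            rw [hbout v rfl hin]
            simp [hvw]
      have htail := ih ws' H' Qs' (hlw.trans hw) (hlq.trans hQ) hinv'
      rw [List.replicate_succ, lams_cons, apps_cons]
      exact Relation.ReflTransGen.head (hstep.apps _) htail

lemma hn_lams_peel : ∀ (xs : List ℕ) (ρ : ℕ → ℕ) (M : Tm),
    Db.HN (toDb ρ (lams xs M)) → ∃ ρ', Db.HN (toDb ρ' M) := by
  intro xs
  induction xs with
  | nil => exact fun ρ M h => ⟨ρ, h⟩
  | cons x xs ih =>
    intro ρ M h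
    exact ih _ M (Db.HN.lam_elim h)

end Tm

/-- A λ-term `M` is solvable iff its head reduction is finite,
i.e. head reduction starting from `M` terminates in a term with no head
redex (a head normal form). -/
theorem solvable_iff_head_reduction_terminates (M : Tm) :
    Tm.Solvable M ↔
      ∃ N : Tm, Relation.ReflTransGen Tm.HeadStep M N ∧
        ∀ P : Tm, ¬ Tm.HeadStep N P := by
  constructor
  · rintro ⟨xs, Ns, y, hfv, hred⟩
    have hdb := Tm.toDb_red hred id
    have hI : Tm.toDb id (Tm.lam y (Tm.var y)) = Db.lam (Db.var 0) := by
      simp [Tm.toDb]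
    rw [hI] at hdb
    have hHN := Db.hn_of_red_id hdb
    rw [Tm.toDb_apps] at hHN
    obtain ⟨ρ', h3⟩ := Tm.hn_lams_peel xs id M hHN.dapps_elim
    exact Tm.head_terminates_of_hn h3 M ρ' rfl
  · rintro ⟨N, hred, hterm⟩
    obtain ⟨zs, v, Ps, rfl⟩ := Tm.progress hterm
    refine ⟨M.fv.toList, List.replicate (M.fv.toList.length + zs.length) (Tm.Uc Ps.length),
      1, ?_, ?_⟩
    · intro a ha
      simpa using ha
    · have hMN : Tm.Red M (Tm.lams zs (Tm.apps (Tm.var v) Ps)) := Tm.Red.of_head hred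
      have h1 : Tm.Red (Tm.apps (Tm.lams M.fv.toList M)
            (List.replicate (M.fv.toList.length + zs.length) (Tm.Uc Ps.length)))
          (Tm.apps (Tm.lams (M.fv.toList ++ zs) (Tm.apps (Tm.var v) Ps))
            (List.replicate (M.fv.toList.length + zs.length) (Tm.Uc Ps.length))) := by
        rw [Tm.lams_append]
        exact (hMN.lams_congr _).apps_congr _
      have hv : v ∈ M.fv.toList ++ zs := by
        by_cases hz : v ∈ zs
        · exact List.mem_append.2 (Or.inr hz)
        · have hvN : v ∈ Tm.fv (Tm.lams zs (Tm.apps (Tm.var v) Ps)) :=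
            (Tm.mem_fv_lams _ _).2 ⟨Tm.mem_fv_apps _ (by simp [Tm.fv]), hz⟩
          exact List.mem_append.2 (Or.inl (Finset.mem_toList.2 (Tm.fv_red hMN hvN)))
      have hpeel := Tm.peel Ps.length ((M.fv.toList ++ zs).length) (M.fv.toList ++ zs)
        (Tm.var v) Ps rfl rfl (Or.inr ⟨v, rfl, hv⟩)
      rw [List.length_append] at hpeel
      exact h1.trans hpeel
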